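/- Let w, x, y, z be nonnegative real numbers with w + x + y + z = 1, and suppose the Pauli channel E(ρ) = wρ + xXρX + yYρY + zZρZ is a perfect encryption, i.e., E(ρ) = (1/2)I for every single-qubit density matrix ρ. Then w = x = y = z = 1/4; the uniform distribution over the four Pauli matrices is the only Pauli scheme achieving perfect encryption. -/
import Mathlib


open Matrix
open scoped ComplexOrder

noncomputable section

/-- The Pauli matrix X. -/
def PX : Matrix (Fin 2) (Fin 2) ℂ := !![0, 1; 1, 0]
/-- The Pauli matrix Y. -/
def PY : Matrix (Fin 2) (Fin 2) ℂ := !![0, -Complex.I; Complex.I, 0]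
/-- The Pauli matrix Z. -/
def PZ : Matrix (Fin 2) (Fin 2) ℂ := !![1, 0; 0, -1]

def aa : ℂ := ((Real.sqrt 2)⁻¹ : ℝ)

lemma aa_sq : aa * aa = 1/2 := by
  have h : Real.sqrt 2 * Real.sqrt 2 = 2 := Real.mul_self_sqrt (by norm_num)
  simp only [aa]
  rw [← Complex.ofReal_mul, ← mul_inv, h]
  norm_num

lemma hr : (starRingEnd ℂ) aa = aa := by simp [aa]

lemma psd1 : (!![(1:ℂ),0;0,0] : Matrix (Fin 2) (Fin 2) ℂ).PosSemidef := by
  have e : (!![(1:ℂ),0;0,0])ᴴ * !![(1:ℂ),0;0,0] = !![(1:ℂ),0;0,0] := by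
    ext i j
    fin_cases i <;> fin_cases j <;>
      simp [Matrix.mul_apply, Fin.sum_univ_two, Matrix.conjTranspose_apply]
  exact e ▸ posSemidef_conjTranspose_mul_self _

lemma psd2 : (!![(1/2:ℂ),1/2;1/2,1/2] : Matrix (Fin 2) (Fin 2) ℂ).PosSemidef := by
  have e : (!![aa,aa;0,0])ᴴ * !![aa,aa;0,0] = !![(1/2:ℂ),1/2;1/2,1/2] := by
    have h2 := aa_sq
    ext i j
    fin_cases i <;> fin_cases j <;>
      simp [Matrix.mul_apply, Fin.sum_univ_two, Matrix.conjTranspose_apply, hr] <;>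
      linear_combination h2
  exact e ▸ posSemidef_conjTranspose_mul_self _

lemma psd3 : (!![(1/2:ℂ), -Complex.I/2; Complex.I/2, 1/2] : Matrix (Fin 2) (Fin 2) ℂ).PosSemidef := by
  have e : (!![aa, -Complex.I*aa;0,0])ᴴ * !![aa, -Complex.I*aa;0,0]
      = !![(1/2:ℂ), -Complex.I/2; Complex.I/2, 1/2] := by
    have h2 := aa_sq
    ext i j
    fin_cases i <;> fin_cases j <;>
      simp [Matrix.mul_apply, Fin.sum_univ_two, Matrix.conjTranspose_apply, hr] <;>
      first
        | linear_combination h2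
        | linear_combination -Complex.I * h2
        | linear_combination Complex.I * h2
        | linear_combination h2 - aa^2 * Complex.I_sq
  exact e ▸ posSemidef_conjTranspose_mul_self _

/-- If the Pauli channel `E(ρ) = wρ + xXρX + yYρY + zZρZ` sends every single-qubit density
matrix to the completely mixed state `(1/2)I`, then `w = x = y = z = 1/4`: the uniform
distribution over the four Pauli matrices is the only Pauli scheme achieving perfect
encryption. -/
theorem perfect_pauli_encryption_unique (w x y z : ℝ)
    (hw : 0 ≤ w) (hx : 0 ≤ x) (hy : 0 ≤ y) (hz : 0 ≤ z)
    (hsum : w + x + y + z = 1)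
    (hperfect : ∀ ρ : Matrix (Fin 2) (Fin 2) ℂ, ρ.PosSemidef → ρ.trace = 1 →
      w • ρ + x • (PX * ρ * PX) + y • (PY * ρ * PY) + z • (PZ * ρ * PZ)
        = (1/2 : ℝ) • (1 : Matrix (Fin 2) (Fin 2) ℂ)) :
    w = 1/4 ∧ x = 1/4 ∧ y = 1/4 ∧ z = 1/4 := by
  have h1 := hperfect _ psd1 (by simp [Matrix.trace_fin_two])
  have h2 := hperfect _ psd2 (by norm_num [Matrix.trace_fin_two])
  have h3 := hperfect _ psd3 (by norm_num [Matrix.trace_fin_two])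
  have e1 := congrFun (congrFun h1 0) 0
  have e2 := congrFun (congrFun h2 0) 1
  have e3 := congrFun (congrFun h3 1) 0
  simp [PX, PY, PZ, Matrix.mul_apply, Fin.sum_univ_two, Matrix.smul_apply,
    Matrix.one_apply, Matrix.add_apply, Complex.ext_iff] at e1 e2 e3
  exact ⟨by linarith, by linarith, by linarith, by linarith⟩

end
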